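/- Deterministic version of Theorem 5: let B̂_k minimize ‖Y − XB‖_F² over all p×n matrices B of rank at most k, where Y = XA + E. Then for any θ > 0, with c(θ) = 1 + 2/θ, ‖XB̂_k − XA‖_F² ≤ c(θ)² Σ_{j>k} dⱼ²(XA) + 2(1+θ)c(θ)·k·d₁²(PE), where P is the projection onto the column space of X. -/

import Mathlib

open Matrix MeasureTheory

/-- List of singular values of a real matrix, sorted in decreasing order
(square roots of the eigenvalues of `Aᵀ * A`). -/
noncomputable def svList {m n : ℕ} (A : Matrix (Fin m) (Fin n) ℝ) : List ℝ :=
  (((List.ofFn (show (Aᵀ * A).IsHermitian by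
    rw [IsHermitian, conjTranspose_eq_transpose_of_trivial, transpose_mul, transpose_transpose]).eigenvalues).map Real.sqrt).mergeSort
    (fun a b => decide (b ≤ a)))

/-- `sv A k` is the `k`-th largest singular value of `A` (1-indexed); `0` if `k` exceeds
the number of singular values. -/
noncomputable def sv {m n : ℕ} (A : Matrix (Fin m) (Fin n) ℝ) (k : ℕ) : ℝ :=
  (svList A).getD (k - 1) 0

/-- Nuclear norm: sum of the singular values. -/
noncomputable def nuclearNorm {m n : ℕ} (A : Matrix (Fin m) (Fin n) ℝ) : ℝ :=
  (svList A).sum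

/-- Squared Frobenius norm. -/
noncomputable def frobSq {m n : ℕ} (A : Matrix (Fin m) (Fin n) ℝ) : ℝ :=
  ∑ i, ∑ j, (A i j) ^ 2

/-- Frobenius inner product. -/
noncomputable def frobInner {m n : ℕ} (C D : Matrix (Fin m) (Fin n) ℝ) : ℝ :=
  ∑ i, ∑ j, C i j * D i j

namespace RREAux

lemma exists_svd {m n : ℕ} (Z : Matrix (Fin m) (Fin n) ℝ) :
    ∃ (σ : Fin n → ℝ) (u : Fin n → Fin m → ℝ) (v : Fin n → Fin n → ℝ),
      (∀ i, 0 ≤ σ i) ∧ Antitone σ ∧ svList Z = List.ofFn σ ∧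
      (∀ i j, v i ⬝ᵥ v j = if i = j then 1 else 0) ∧
      (∀ i j, u i ⬝ᵥ u j = if i = j then (if σ i = 0 then 0 else 1) else 0) ∧
      (∀ i, Z *ᵥ v i = σ i • u i) ∧
      (∀ x : Fin n → ℝ, ∑ i, ((v i) ⬝ᵥ x) • (v i) = x) ∧
      Fintype.card {i // σ i ≠ 0} = Z.rank := by
  classical
  set hS : (Zᵀ * Z).IsHermitian := (by
    rw [IsHermitian, conjTranspose_eq_transpose_of_trivial, transpose_mul, transpose_transpose]) with hhS
  set μ : Fin n → ℝ := hS.eigenvalues with hμ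
  set w : Fin n → (Fin n → ℝ) := fun i => ⇑(hS.eigenvectorBasis i) with hw
  have h1 : ∀ i, 0 ≤ μ i := fun i => Matrix.eigenvalues_conjTranspose_mul_self_nonneg Z i
  have h2 : ∀ i, (Zᵀ * Z) *ᵥ w i = μ i • w i := hS.mulVec_eigenvectorBasis
  have h3 : ∀ i j, w i ⬝ᵥ w j = if i = j then 1 else 0 := by
    intro i j
    have := orthonormal_iff_ite.mp hS.eigenvectorBasis.orthonormal i j
    simpa [PiLp.inner_apply, RCLike.inner_apply, dotProduct, hw, mul_comm] using this
  have h4 : ∀ x : Fin n → ℝ, ∑ i, ((w i) ⬝ᵥ x) • (w i) = x := by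
    intro x
    have h := hS.eigenvectorBasis.sum_repr' (WithLp.toLp 2 x)
    have e : ∀ i, (w i ⬝ᵥ x) = (inner (𝕜 := ℝ) (hS.eigenvectorBasis i) (WithLp.toLp 2 x)) := by
      intro i
      simp [PiLp.inner_apply, RCLike.inner_apply, dotProduct, hw, mul_comm]
    calc ∑ i, (w i ⬝ᵥ x) • w i
        = ∑ i, (inner (𝕜 := ℝ) (hS.eigenvectorBasis i) (WithLp.toLp 2 x)) • w i :=
          Finset.sum_congr rfl fun i _ => by rw [e i]
      _ = x := by
          have h' := congrArg WithLp.ofLp h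
          rw [WithLp.ofLp_sum] at h'
          simpa [hw] using h'
  -- key dot product identity
  have hZw : ∀ i j, (Z *ᵥ w i) ⬝ᵥ (Z *ᵥ w j) = if i = j then μ j else 0 := by
    intro i j
    have : (Z *ᵥ w i) ⬝ᵥ (Z *ᵥ w j) = w i ⬝ᵥ ((Zᵀ * Z) *ᵥ w j) := by
      conv_rhs => rw [← Matrix.mulVec_mulVec, Matrix.dotProduct_mulVec, Matrix.vecMul_transpose]
    rw [this, h2, dotProduct_smul, h3]
    by_cases h : i = j <;> simp [h, smul_eq_mul]
  -- sorting
  obtain ⟨e, hanti, hlist⟩ :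
      ∃ e : Equiv.Perm (Fin n), (Antitone fun i => Real.sqrt (μ (e i))) ∧
        svList Z = List.ofFn (fun i => Real.sqrt (μ (e i))) := by
    set f : Fin n → ℝ := fun i => Real.sqrt (μ i) with hf
    set e : Equiv.Perm (Fin n) := Tuple.sort (fun i => -f i) with he
    have hmono : Monotone ((fun i => -f i) ∘ e) := Tuple.monotone_sort (fun i => -f i)
    have hanti : Antitone (f ∘ e) := by
      intro a b hab
      have := hmono hab
      simpa using this
    refine ⟨e, hanti, ?_⟩
    have hperm1 : (svList Z).Perm ((List.ofFn μ).map Real.sqrt) := List.mergeSort_perm _ _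
    have hofn : (List.ofFn μ).map Real.sqrt = List.ofFn f := by
      rw [List.map_ofFn]; rfl
    have hperm2 : (List.ofFn (f ∘ e)).Perm (List.ofFn f) := by
      rw [List.ofFn_eq_map, List.ofFn_eq_map]
      have : (List.finRange n).map (f ∘ e) = ((List.finRange n).map e).map f := by
        rw [List.map_map]
      rw [this]
      refine List.Perm.map f ?_
      refine List.perm_of_nodup_nodup_toFinset_eq ?_ (List.nodup_finRange n) ?_
      · exact (List.nodup_finRange n).map e.injective
      · ext i
        simp only [List.mem_toFinset, List.mem_map, List.mem_finRange, true_and, iff_true]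
        exact ⟨e.symm i, by simp⟩
    have hperm : (svList Z).Perm (List.ofFn (f ∘ e)) :=
      hperm1.trans (hofn ▸ hperm2.symm)
    have hs1 : (svList Z).Pairwise (fun a b => b ≤ a) := by
      have := List.pairwise_mergeSort (le := fun a b : ℝ => decide (b ≤ a))
        (fun a b c h1 h2 => by simp_all; linarith)
        (fun a b => by simp [Bool.or_eq_true]; exact le_total b a)
        ((List.ofFn μ).map Real.sqrt)
      refine List.Pairwise.imp ?_ this
      intro a b h; simpa using h
    have hs2 : (List.ofFn (f ∘ e)).Pairwise (fun a b => b ≤ a) := by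
      rw [List.pairwise_ofFn]
      intro i j hij
      exact hanti hij.le
    have : IsAntisymm ℝ (fun a b => b ≤ a) := ⟨fun a b hab hba => le_antisymm hba hab⟩
    exact List.Perm.eq_of_pairwise (fun a b _ _ hab hba => le_antisymm hba hab) hs1 hs2 hperm
  set σ : Fin n → ℝ := fun i => Real.sqrt (μ (e i)) with hσ
  have hσ0 : ∀ i, 0 ≤ σ i := fun i => Real.sqrt_nonneg _
  have hσsq : ∀ i, σ i ^ 2 = μ (e i) := fun i => Real.sq_sqrt (h1 _)
  have hσzero : ∀ i, σ i = 0 ↔ μ (e i) = 0 := by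
    intro i
    constructor
    · intro h; have := hσsq i; rw [h] at this; simpa using this.symm
    · intro h; simp [hσ, h]
  set v : Fin n → (Fin n → ℝ) := fun i => w (e i) with hv
  set u : Fin n → (Fin m → ℝ) :=
    fun i => if σ i = 0 then 0 else (σ i)⁻¹ • (Z *ᵥ v i) with hu
  have hZv : ∀ i, Z *ᵥ v i = σ i • u i := by
    intro i
    by_cases h : σ i = 0
    · have hμ0 : μ (e i) = 0 := (hσzero i).1 h
      have : (Z *ᵥ v i) ⬝ᵥ (Z *ᵥ v i) = 0 := by
        rw [hv]; simp [hZw, hμ0]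
      have hz : Z *ᵥ v i = 0 := by
        rwa [dotProduct_self_eq_zero] at this
      rw [hz, h, zero_smul]
    · simp only [hu, if_neg h]
      rw [smul_smul, mul_inv_cancel₀ h, one_smul]
  refine ⟨σ, u, v, hσ0, hanti, hlist, ?_, ?_, hZv, ?_, ?_⟩
  · intro i j
    rw [hv]
    simp only [h3]
    by_cases h : i = j
    · simp [h]
    · simp [h, fun hh => h (e.injective hh)]
  · intro i j
    by_cases hi : σ i = 0
    · simp [hu, hi]
    · by_cases hj : σ j = 0
      · have hij : i ≠ j := fun hh => hi (hh ▸ hj)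
        simp [hu, hj, hij]
      · simp only [hu, if_neg hi, if_neg hj]
        rw [smul_dotProduct, dotProduct_smul]
        rw [hv, hZw]
        by_cases h : i = j
        · subst h
          rw [if_pos rfl]
          field_simp
          rw [← hσsq i]; simp only [if_true, if_neg hi, smul_eq_mul]; field_simp
        · rw [if_neg (fun hh => h (e.injective hh))]
          simp [h, hi]
  · intro x
    have := h4 x
    calc ∑ i, (v i ⬝ᵥ x) • v i = ∑ i, (w (e i) ⬝ᵥ x) • w (e i) := rfl
      _ = ∑ i, (w i ⬝ᵥ x) • w i := Equiv.sum_comp e (fun i => (w i ⬝ᵥ x) • w i)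
      _ = x := h4 x
  · have hrk : Z.rank = Fintype.card {i // μ i ≠ 0} := by
      rw [← Matrix.rank_transpose_mul_self Z]
      exact hS.rank_eq_card_non_zero_eigs
    rw [hrk]
    refine Fintype.card_congr (Equiv.subtypeEquiv e ?_)
    intro i
    simp only [ne_eq, hσzero i]

/-- swap a double `Fintype` sum past a `Finset` sum -/
lemma swap_ab {A B : Type*} [Fintype A] [Fintype B] {α : Type*} (s : Finset α)
    (F : A → B → α → ℝ) :
    ∑ a, ∑ b, ∑ i ∈ s, F a b i = ∑ i ∈ s, ∑ a, ∑ b, F a b i := by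
  calc ∑ a, ∑ b, ∑ i ∈ s, F a b i
      = ∑ a, ∑ i ∈ s, ∑ b, F a b i := Finset.sum_congr rfl fun a _ => Finset.sum_comm
    _ = ∑ i ∈ s, ∑ a, ∑ b, F a b i := Finset.sum_comm

lemma decomp_entry {m n : ℕ} (Z : Matrix (Fin m) (Fin n) ℝ)
    (σ : Fin n → ℝ) (u : Fin n → Fin m → ℝ) (v : Fin n → Fin n → ℝ)
    (hZv : ∀ i, Z *ᵥ v i = σ i • u i)
    (hexp : ∀ x : Fin n → ℝ, ∑ i, ((v i) ⬝ᵥ x) • (v i) = x) :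
    ∀ a b, Z a b = ∑ i, σ i * (u i a * v i b) := by
  intro a b
  have hδ : ∀ c, (∑ i, (v i b) * (v i c)) = if c = b then 1 else 0 := by
    intro c
    have h := congrFun (hexp (Pi.single b 1)) c
    simpa [dotProduct_single, Pi.single_apply] using h
  have hmv : ∀ i, (Z *ᵥ v i) a = σ i * u i a := by
    intro i; rw [hZv i]; rfl
  calc Z a b = ∑ c, Z a c * (if c = b then 1 else 0) := by
        simp
    _ = ∑ c, Z a c * (∑ i, (v i b) * (v i c)) := by
        exact Finset.sum_congr rfl fun c _ => by rw [hδ c]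
    _ = ∑ c, ∑ i, Z a c * ((v i b) * (v i c)) := by
        exact Finset.sum_congr rfl fun c _ => Finset.mul_sum _ _ _
    _ = ∑ i, ∑ c, Z a c * ((v i b) * (v i c)) := Finset.sum_comm
    _ = ∑ i, (v i b) * (∑ c, Z a c * v i c) := by
        refine Finset.sum_congr rfl fun i _ => ?_
        rw [Finset.mul_sum]
        exact Finset.sum_congr rfl fun c _ => by ring
    _ = ∑ i, (v i b) * ((Z *ᵥ v i) a) := rfl
    _ = ∑ i, σ i * (u i a * v i b) := by
        refine Finset.sum_congr rfl fun i _ => ?_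
        rw [hmv i]; ring

lemma frobSq_ofSum {m n : ℕ} (σ : Fin n → ℝ) (u : Fin n → Fin m → ℝ)
    (v : Fin n → Fin n → ℝ)
    (hv : ∀ i j, v i ⬝ᵥ v j = if i = j then 1 else 0)
    (hu : ∀ i j, u i ⬝ᵥ u j = if i = j then (if σ i = 0 then 0 else 1) else 0)
    (s : Finset (Fin n)) :
    frobSq (Matrix.of fun a b => ∑ i ∈ s, σ i * (u i a * v i b)) = ∑ i ∈ s, σ i ^ 2 := by
  unfold frobSq
  calc ∑ a, ∑ b, ((Matrix.of fun a b => ∑ i ∈ s, σ i * (u i a * v i b)) a b) ^ 2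
      = ∑ a, ∑ b, ∑ i ∈ s, ∑ j ∈ s,
          (σ i * (u i a * v i b)) * (σ j * (u j a * v j b)) := by
        refine Finset.sum_congr rfl fun a _ => Finset.sum_congr rfl fun b _ => ?_
        rw [Matrix.of_apply, sq, Finset.sum_mul_sum]
    _ = ∑ i ∈ s, ∑ a, ∑ b, ∑ j ∈ s,
          (σ i * (u i a * v i b)) * (σ j * (u j a * v j b)) :=
        swap_ab s _
    _ = ∑ i ∈ s, ∑ j ∈ s, ∑ a, ∑ b,
          (σ i * (u i a * v i b)) * (σ j * (u j a * v j b)) :=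
        Finset.sum_congr rfl fun i _ => swap_ab s _
    _ = ∑ i ∈ s, ∑ j ∈ s, (σ i * σ j) * ((u i ⬝ᵥ u j) * (v i ⬝ᵥ v j)) := by
        refine Finset.sum_congr rfl fun i _ => Finset.sum_congr rfl fun j _ => ?_
        unfold dotProduct
        rw [Finset.sum_mul_sum, Finset.mul_sum]
        refine Finset.sum_congr rfl fun a _ => ?_
        rw [Finset.mul_sum]
        exact Finset.sum_congr rfl fun b _ => by ring
    _ = ∑ i ∈ s, σ i ^ 2 := by
        refine Finset.sum_congr rfl fun i hi => ?_
        rw [Finset.sum_eq_single i]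
        · rw [hu, hv, if_pos rfl, if_pos rfl]
          by_cases h : σ i = 0 <;> simp [h] <;> ring
        · intro j hj hne
          rw [hv, if_neg (fun hh => hne hh.symm)]
          ring
        · intro h; exact absurd hi h

lemma frobInner_ofSum {m n : ℕ} (C : Matrix (Fin m) (Fin n) ℝ) (σ : Fin n → ℝ)
    (u : Fin n → Fin m → ℝ) (v : Fin n → Fin n → ℝ) (s : Finset (Fin n)) :
    frobInner C (Matrix.of fun a b => ∑ i ∈ s, σ i * (u i a * v i b))
      = ∑ i ∈ s, σ i * (u i ⬝ᵥ (C *ᵥ v i)) := by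
  unfold frobInner
  calc ∑ a, ∑ b, C a b * ((Matrix.of fun a b => ∑ i ∈ s, σ i * (u i a * v i b)) a b)
      = ∑ a, ∑ b, ∑ i ∈ s, C a b * (σ i * (u i a * v i b)) := by
        refine Finset.sum_congr rfl fun a _ => Finset.sum_congr rfl fun b _ => ?_
        rw [Matrix.of_apply, Finset.mul_sum]
    _ = ∑ i ∈ s, ∑ a, ∑ b, C a b * (σ i * (u i a * v i b)) := swap_ab s _
    _ = ∑ i ∈ s, σ i * (u i ⬝ᵥ (C *ᵥ v i)) := by
        refine Finset.sum_congr rfl fun i _ => ?_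
        unfold dotProduct Matrix.mulVec
        rw [Finset.mul_sum]
        refine Finset.sum_congr rfl fun a _ => ?_
        unfold dotProduct
        rw [Finset.mul_sum, Finset.mul_sum]
        refine Finset.sum_congr rfl fun b _ => by ring

lemma sv_nonneg {m n : ℕ} (Z : Matrix (Fin m) (Fin n) ℝ) (j : ℕ) : 0 ≤ sv Z j := by
  obtain ⟨σ, u, v, hσ0, _, hlist, _⟩ := exists_svd Z
  unfold sv
  rw [hlist]
  rcases lt_or_ge (j - 1) (List.ofFn σ).length with h | h
  · rw [List.getD_eq_getElem _ _ h, List.getElem_ofFn]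
    exact hσ0 _
  · rw [List.getD_eq_default _ _ h]

lemma dot_le_sqrt {n : ℕ} (x y : Fin n → ℝ) :
    x ⬝ᵥ y ≤ Real.sqrt (x ⬝ᵥ x) * Real.sqrt (y ⬝ᵥ y) := by
  have h := Finset.sum_mul_sq_le_sq_mul_sq Finset.univ x y
  have hxx : x ⬝ᵥ x = ∑ i, x i ^ 2 := by
    unfold dotProduct; exact Finset.sum_congr rfl fun i _ => (sq (x i)).symm
  have hyy : y ⬝ᵥ y = ∑ i, y i ^ 2 := by
    unfold dotProduct; exact Finset.sum_congr rfl fun i _ => (sq (y i)).symm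
  have hd : x ⬝ᵥ y = ∑ i, x i * y i := rfl
  calc x ⬝ᵥ y ≤ |x ⬝ᵥ y| := le_abs_self _
    _ = Real.sqrt ((x ⬝ᵥ y) ^ 2) := (Real.sqrt_sq_eq_abs _).symm
    _ ≤ Real.sqrt ((∑ i, x i ^ 2) * (∑ i, y i ^ 2)) := by
        apply Real.sqrt_le_sqrt
        rw [hd]; exact h
    _ = Real.sqrt (x ⬝ᵥ x) * Real.sqrt (y ⬝ᵥ y) := by
        rw [hxx, hyy, Real.sqrt_mul (Finset.sum_nonneg fun i _ => sq_nonneg _)]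

lemma op_bound {m n : ℕ} (C : Matrix (Fin m) (Fin n) ℝ) (y : Fin m → ℝ) (x : Fin n → ℝ) :
    y ⬝ᵥ (C *ᵥ x) ≤ sv C 1 * (Real.sqrt (y ⬝ᵥ y) * Real.sqrt (x ⬝ᵥ x)) := by
  obtain ⟨σ, u, v, hσ0, hanti, hlist, hv, hu, hZv, hexp, _⟩ := exists_svd C
  have hsv0 : 0 ≤ sv C 1 := sv_nonneg C 1
  rcases Nat.eq_zero_or_pos n with hn | hn
  · subst hn
    have : C *ᵥ x = 0 := by
      funext a; simp [Matrix.mulVec, dotProduct]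
    rw [this]
    simp only [dotProduct_zero]
    positivity
  -- σ i ≤ sv C 1
  have hmax : ∀ i, σ i ≤ sv C 1 := by
    intro i
    have h0 : (0 : ℕ) < (List.ofFn σ).length := by simpa using hn
    have : sv C 1 = σ ⟨0, hn⟩ := by
      unfold sv
      rw [hlist]
      rw [List.getD_eq_getElem _ _ (by simpa using hn), List.getElem_ofFn]
    rw [this]
    exact hanti (by exact Fin.mk_le_of_le_val (Nat.zero_le _))
  -- Cx in terms of the SVD
  have hdec := decomp_entry C σ u v hZv hexp
  have hCx : ∀ a, (C *ᵥ x) a = ∑ i, (σ i * (v i ⬝ᵥ x)) * u i a := by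
    intro a
    unfold Matrix.mulVec dotProduct
    calc ∑ b, C a b * x b = ∑ b, (∑ i, σ i * (u i a * v i b)) * x b :=
          Finset.sum_congr rfl fun b _ => by rw [← hdec a b]
      _ = ∑ b, ∑ i, (σ i * (u i a * v i b)) * x b :=
          Finset.sum_congr rfl fun b _ => Finset.sum_mul _ _ _
      _ = ∑ i, ∑ b, (σ i * (u i a * v i b)) * x b := Finset.sum_comm
      _ = ∑ i, (σ i * (v i ⬝ᵥ x)) * u i a := by
          refine Finset.sum_congr rfl fun i _ => ?_
          unfold dotProduct
          rw [Finset.mul_sum, Finset.sum_mul]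
          refine Finset.sum_congr rfl fun b _ => by ring
  -- norm of Cx
  have hCxnorm : (C *ᵥ x) ⬝ᵥ (C *ᵥ x) = ∑ i, σ i ^ 2 * (v i ⬝ᵥ x) ^ 2 := by
    unfold dotProduct
    calc ∑ a, (C *ᵥ x) a * (C *ᵥ x) a
        = ∑ a, ∑ i, ∑ j, ((σ i * (v i ⬝ᵥ x)) * u i a) * ((σ j * (v j ⬝ᵥ x)) * u j a) := by
          refine Finset.sum_congr rfl fun a _ => ?_
          rw [hCx a, Finset.sum_mul_sum]
      _ = ∑ i, ∑ a, ∑ j, ((σ i * (v i ⬝ᵥ x)) * u i a) * ((σ j * (v j ⬝ᵥ x)) * u j a) :=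
          Finset.sum_comm
      _ = ∑ i, ∑ j, ∑ a, ((σ i * (v i ⬝ᵥ x)) * u i a) * ((σ j * (v j ⬝ᵥ x)) * u j a) :=
          Finset.sum_congr rfl fun i _ => Finset.sum_comm
      _ = ∑ i, ∑ j, ((σ i * (v i ⬝ᵥ x)) * (σ j * (v j ⬝ᵥ x))) * (u i ⬝ᵥ u j) := by
          refine Finset.sum_congr rfl fun i _ => Finset.sum_congr rfl fun j _ => ?_
          unfold dotProduct
          conv_rhs => rw [Finset.mul_sum]
          exact Finset.sum_congr rfl fun a _ => by ring
      _ = ∑ i, σ i ^ 2 * (v i ⬝ᵥ x) ^ 2 := by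
          refine Finset.sum_congr rfl fun i hi => ?_
          rw [Finset.sum_eq_single i]
          · rw [hu, if_pos rfl]
            by_cases h : σ i = 0 <;> simp [h] <;> ring
          · intro j hj hne
            rw [hu, if_neg (fun hh => hne hh.symm)]; ring
          · intro h; exact absurd (Finset.mem_univ i) h
  have hParseval : ∑ i, (v i ⬝ᵥ x) ^ 2 = x ⬝ᵥ x := by
    have h : x ⬝ᵥ (∑ i, (v i ⬝ᵥ x) • v i) = x ⬝ᵥ x := congrArg (fun z => x ⬝ᵥ z) (hexp x)
    rw [← h]
    calc ∑ i, (v i ⬝ᵥ x) ^ 2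
        = ∑ i, ∑ c, x c * ((v i ⬝ᵥ x) * v i c) := by
          refine Finset.sum_congr rfl fun i _ => ?_
          have hvx : v i ⬝ᵥ x = ∑ c, x c * v i c := by
            unfold dotProduct
            exact Finset.sum_congr rfl fun c _ => by ring
          rw [sq, hvx, Finset.sum_mul]
          exact Finset.sum_congr rfl fun c _ => by ring
      _ = ∑ c, ∑ i, x c * ((v i ⬝ᵥ x) * v i c) := Finset.sum_comm
      _ = x ⬝ᵥ (∑ i, (v i ⬝ᵥ x) • v i) := by
          unfold dotProduct
          refine Finset.sum_congr rfl fun c _ => ?_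
          rw [Finset.sum_apply, Finset.mul_sum]
          exact Finset.sum_congr rfl fun i _ => by simp [smul_eq_mul]
  have hnormle : (C *ᵥ x) ⬝ᵥ (C *ᵥ x) ≤ (sv C 1) ^ 2 * (x ⬝ᵥ x) := by
    rw [hCxnorm, ← hParseval, Finset.mul_sum]
    refine Finset.sum_le_sum fun i _ => ?_
    have h1 : σ i ^ 2 ≤ (sv C 1) ^ 2 := by
      apply sq_le_sq'
      · nlinarith [hσ0 i, hmax i]
      · exact hmax i
    nlinarith [sq_nonneg (v i ⬝ᵥ x)]
  calc y ⬝ᵥ (C *ᵥ x)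
      ≤ Real.sqrt (y ⬝ᵥ y) * Real.sqrt ((C *ᵥ x) ⬝ᵥ (C *ᵥ x)) := dot_le_sqrt _ _
    _ ≤ Real.sqrt (y ⬝ᵥ y) * Real.sqrt ((sv C 1) ^ 2 * (x ⬝ᵥ x)) := by
        apply mul_le_mul_of_nonneg_left _ (Real.sqrt_nonneg _)
        exact Real.sqrt_le_sqrt hnormle
    _ = sv C 1 * (Real.sqrt (y ⬝ᵥ y) * Real.sqrt (x ⬝ᵥ x)) := by
        rw [Real.sqrt_mul (sq_nonneg _), Real.sqrt_sq hsv0]; ring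

lemma frobSq_nonneg {m n : ℕ} (C : Matrix (Fin m) (Fin n) ℝ) : 0 ≤ frobSq C :=
  Finset.sum_nonneg fun _ _ => Finset.sum_nonneg fun _ _ => sq_nonneg _

lemma frob_expand_sub {m n : ℕ} (C D : Matrix (Fin m) (Fin n) ℝ) :
    frobSq (C - D) = frobSq C - 2 * frobInner C D + frobSq D := by
  have h : ∀ a b, (C a b - D a b) ^ 2
      = C a b ^ 2 - 2 * (C a b * D a b) + D a b ^ 2 := fun a b => by ring
  simp only [frobSq, frobInner, Matrix.sub_apply, h, Finset.sum_add_distrib,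
    Finset.sum_sub_distrib, Finset.mul_sum]

lemma frob_expand_add {m n : ℕ} (C D : Matrix (Fin m) (Fin n) ℝ) :
    frobSq (C + D) = frobSq C + 2 * frobInner C D + frobSq D := by
  have h : ∀ a b, (C a b + D a b) ^ 2
      = C a b ^ 2 + 2 * (C a b * D a b) + D a b ^ 2 := fun a b => by ring
  simp only [frobSq, frobInner, Matrix.add_apply, h, Finset.sum_add_distrib, Finset.mul_sum]

lemma frobInner_add_right {m n : ℕ} (C D1 D2 : Matrix (Fin m) (Fin n) ℝ) :
    frobInner C (D1 + D2) = frobInner C D1 + frobInner C D2 := by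
  simp only [frobInner, Matrix.add_apply, mul_add, Finset.sum_add_distrib]

lemma frobInner_le {m n : ℕ} (C D : Matrix (Fin m) (Fin n) ℝ) :
    frobInner C D ≤ Real.sqrt (frobSq C) * Real.sqrt (frobSq D) := by
  have h1 : frobInner C D = ∑ q : Fin m × Fin n, C q.1 q.2 * D q.1 q.2 := by
    rw [Fintype.sum_prod_type]; rfl
  have h2 : frobSq C = ∑ q : Fin m × Fin n, C q.1 q.2 ^ 2 := by
    rw [Fintype.sum_prod_type]; rfl
  have h3 : frobSq D = ∑ q : Fin m × Fin n, D q.1 q.2 ^ 2 := by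
    rw [Fintype.sum_prod_type]; rfl
  have h := Finset.sum_mul_sq_le_sq_mul_sq Finset.univ
    (fun q : Fin m × Fin n => C q.1 q.2) (fun q : Fin m × Fin n => D q.1 q.2)
  rw [h1, h2, h3]
  calc ∑ q : Fin m × Fin n, C q.1 q.2 * D q.1 q.2
      ≤ |∑ q : Fin m × Fin n, C q.1 q.2 * D q.1 q.2| := le_abs_self _
    _ = Real.sqrt ((∑ q : Fin m × Fin n, C q.1 q.2 * D q.1 q.2) ^ 2) :=
        (Real.sqrt_sq_eq_abs _).symm
    _ ≤ Real.sqrt ((∑ q : Fin m × Fin n, C q.1 q.2 ^ 2) * (∑ q : Fin m × Fin n, D q.1 q.2 ^ 2)) :=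
        Real.sqrt_le_sqrt h
    _ = _ := Real.sqrt_mul (Finset.sum_nonneg fun _ _ => sq_nonneg _) _

lemma frobInner_trace {m n : ℕ} (C D : Matrix (Fin m) (Fin n) ℝ) :
    frobInner C D = Matrix.trace (Cᵀ * D) := by
  unfold frobInner Matrix.trace Matrix.diag
  simp only [Matrix.mul_apply, Matrix.transpose_apply]
  exact Finset.sum_comm

lemma frobInner_proj {m n p : ℕ} (E : Matrix (Fin m) (Fin n) ℝ)
    (P : Matrix (Fin m) (Fin m) ℝ) (X : Matrix (Fin m) (Fin p) ℝ)
    (N : Matrix (Fin p) (Fin n) ℝ) (hPsymm : Pᵀ = P) (hPX : P * X = X) :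
    frobInner (P * E) (X * N) = frobInner E (X * N) := by
  rw [frobInner_trace, frobInner_trace]
  congr 1
  rw [Matrix.transpose_mul, hPsymm, Matrix.mul_assoc, ← Matrix.mul_assoc P X N, hPX]

lemma rank_ofSum_le {p n : ℕ} (σ : Fin n → ℝ) (c : Fin n → Fin p → ℝ)
    (v : Fin n → Fin n → ℝ) (s : Finset (Fin n)) :
    (Matrix.of fun a b => ∑ i ∈ s, σ i * (c i a * v i b) : Matrix (Fin p) (Fin n) ℝ).rank
      ≤ s.card := by
  classical
  have hmv : ∀ x : Fin n → ℝ,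
      (Matrix.of fun a b => ∑ i ∈ s, σ i * (c i a * v i b) : Matrix (Fin p) (Fin n) ℝ) *ᵥ x
        = ∑ i ∈ s, (σ i * (v i ⬝ᵥ x)) • c i := by
    intro x
    funext a
    rw [Finset.sum_apply]
    simp only [Matrix.mulVec, dotProduct, Matrix.of_apply, Pi.smul_apply, smul_eq_mul]
    calc ∑ b, (∑ i ∈ s, σ i * (c i a * v i b)) * x b
        = ∑ b, ∑ i ∈ s, (σ i * (c i a * v i b)) * x b :=
          Finset.sum_congr rfl fun b _ => Finset.sum_mul _ _ _
      _ = ∑ i ∈ s, ∑ b, (σ i * (c i a * v i b)) * x b := Finset.sum_comm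
      _ = ∑ i ∈ s, (σ i * ∑ b, v i b * x b) * c i a := by
          refine Finset.sum_congr rfl fun i _ => ?_
          conv_rhs => rw [Finset.mul_sum, Finset.sum_mul]
          exact Finset.sum_congr rfl fun b _ => by ring
  have hrange : LinearMap.range
      (Matrix.of fun a b => ∑ i ∈ s, σ i * (c i a * v i b) : Matrix (Fin p) (Fin n) ℝ).mulVecLin
        ≤ Submodule.span ℝ (↑(s.image c)) := by
    rintro _ ⟨x, rfl⟩
    rw [Matrix.mulVecLin_apply, hmv x]
    refine Submodule.sum_mem _ fun i hi => ?_
    refine Submodule.smul_mem _ _ (Submodule.subset_span ?_)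
    exact Finset.mem_coe.2 (Finset.mem_image_of_mem c hi)
  unfold Matrix.rank
  refine le_trans (Submodule.finrank_mono hrange) ?_
  refine le_trans ?_ (Finset.card_image_le (f := c) (s := s))
  simpa [Set.finrank] using finrank_span_finset_le_card (s.image c)

lemma rank_sub_le {p n : ℕ} (M N : Matrix (Fin p) (Fin n) ℝ) :
    (M - N).rank ≤ M.rank + N.rank := by
  have h1 : (M - N).mulVecLin = M.mulVecLin - N.mulVecLin := by
    ext x
    simp [Matrix.sub_mulVec, sub_eq_add_neg]
  have h2 : LinearMap.range (M - N).mulVecLin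
      ≤ LinearMap.range M.mulVecLin ⊔ LinearMap.range N.mulVecLin := by
    rw [h1]
    rintro _ ⟨x, rfl⟩
    refine Submodule.mem_sup.2 ⟨M.mulVecLin x, ⟨x, rfl⟩, -(N.mulVecLin x), ?_,
      by simp [sub_eq_add_neg]⟩
    exact ⟨-x, by simp [Matrix.mulVec_neg]⟩
  refine le_trans (Submodule.finrank_mono h2) ?_
  exact Submodule.finrank_add_le_finrank_add_finrank
    (LinearMap.range M.mulVecLin) (LinearMap.range N.mulVecLin)

lemma scalar_final (θ b s : ℝ) (hθ : 0 < θ) (hb : 0 ≤ b) (hs : 0 ≤ s) :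
    (b + 2 * s) ^ 2 ≤ (1 + 2 / θ) ^ 2 * b ^ 2 + (1 + θ) * (1 + 2 / θ) * s ^ 2 := by
  have h1 : (0 : ℝ) < 1 + θ := by linarith
  have hθ' : θ ≠ 0 := ne_of_gt hθ
  have key : 0 ≤ (θ + 2) ^ 2 * b ^ 2 + (1 + θ) * (θ + 2) * θ * s ^ 2
      - θ ^ 2 * (b + 2 * s) ^ 2 := by
    nlinarith [sq_nonneg (2 * (1 + θ) * b - θ ^ 2 * s),
      mul_nonneg (show (0:ℝ) ≤ θ ^ 2 + 2 * θ by positivity) (sq_nonneg s), h1]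
  have expand : (1 + 2 / θ) ^ 2 * b ^ 2 + (1 + θ) * (1 + 2 / θ) * s ^ 2 - (b + 2 * s) ^ 2
      = ((θ + 2) ^ 2 * b ^ 2 + (1 + θ) * (θ + 2) * θ * s ^ 2
        - θ ^ 2 * (b + 2 * s) ^ 2) / θ ^ 2 := by
    field_simp
  have hpos : 0 ≤ ((θ + 2) ^ 2 * b ^ 2 + (1 + θ) * (θ + 2) * θ * s ^ 2
      - θ ^ 2 * (b + 2 * s) ^ 2) / θ ^ 2 := div_nonneg key (sq_nonneg θ)
  linarith [expand, hpos]

end RREAux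

set_option maxHeartbeats 3200000 in
/-- Theorem 5 (deterministic form): the restricted-rank least squares estimator B̂_k
satisfies ‖XB̂_k − XA‖_F² ≤ c(θ)²Σ_{j>k}d_j²(XA) + 2(1+θ)c(θ)k d₁²(PE). -/
theorem restricted_rank_estimator_bound {m n p : ℕ}
    (Y : Matrix (Fin m) (Fin n) ℝ) (X : Matrix (Fin m) (Fin p) ℝ)
    (A : Matrix (Fin p) (Fin n) ℝ)
    (P : Matrix (Fin m) (Fin m) ℝ)
    (hPsymm : Pᵀ = P) (hPidem : P * P = P) (hPX : P * X = X)
    (hPrange : ∀ u : Fin m → ℝ, ∃ w : Fin p → ℝ, P *ᵥ u = X *ᵥ w)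
    (k : ℕ) (Bk : Matrix (Fin p) (Fin n) ℝ) (hBkrank : Bk.rank ≤ k)
    (hBkmin : ∀ B : Matrix (Fin p) (Fin n) ℝ, B.rank ≤ k →
      frobSq (Y - X * Bk) ≤ frobSq (Y - X * B))
    (θ : ℝ) (hθ : 0 < θ) :
    frobSq (X * Bk - X * A)
      ≤ (1 + 2 / θ) ^ 2 * (∑ j ∈ Finset.Icc (k + 1) n, (sv (X * A) j) ^ 2)
        + 2 * (1 + θ) * (1 + 2 / θ) * k * (sv (P * (Y - X * A)) 1) ^ 2 := by
  classical
  obtain ⟨σ, u, v, hσ0, hanti, hlist, hv, hu, hZv, hexp, hcard⟩ := RREAux.exists_svd (X * A)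
  have hdec := RREAux.decomp_entry (X * A) σ u v hZv hexp
  set sset : Finset (Fin n) := Finset.univ.filter (fun i => (i : ℕ) < k) with hsset
  set M : Matrix (Fin m) (Fin n) ℝ :=
    Matrix.of (fun a b => ∑ i ∈ sset, σ i * (u i a * v i b)) with hM
  set wc : Fin n → (Fin p → ℝ) :=
    (fun i => if σ i = 0 then 0 else (σ i)⁻¹ • (A *ᵥ v i)) with hwc
  set B : Matrix (Fin p) (Fin n) ℝ :=
    Matrix.of (fun a b => ∑ i ∈ sset, σ i * (wc i a * v i b)) with hB
  -- X * B = M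
  have hXwc : ∀ i, σ i • (X *ᵥ wc i) = σ i • u i := by
    intro i
    by_cases h : σ i = 0
    · rw [h]; simp
    · have h1 : X *ᵥ wc i = (σ i)⁻¹ • ((X * A) *ᵥ v i) := by
        simp only [hwc, if_neg h]
        rw [Matrix.mulVec_smul, Matrix.mulVec_mulVec]
      rw [h1, hZv i, inv_smul_smul₀ h]
  have hXB : X * B = M := by
    ext a b
    rw [Matrix.mul_apply]
    show ∑ c, X a c * (∑ i ∈ sset, σ i * (wc i c * v i b)) = M a b
    calc ∑ c, X a c * (∑ i ∈ sset, σ i * (wc i c * v i b))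
        = ∑ c, ∑ i ∈ sset, X a c * (σ i * (wc i c * v i b)) :=
          Finset.sum_congr rfl fun c _ => Finset.mul_sum _ _ _
      _ = ∑ i ∈ sset, ∑ c, X a c * (σ i * (wc i c * v i b)) := Finset.sum_comm
      _ = ∑ i ∈ sset, (σ i * ∑ c, X a c * wc i c) * v i b := by
          refine Finset.sum_congr rfl fun i _ => ?_
          conv_rhs => rw [Finset.mul_sum, Finset.sum_mul]
          exact Finset.sum_congr rfl fun c _ => by ring
      _ = ∑ i ∈ sset, (σ i * u i a) * v i b := by
          refine Finset.sum_congr rfl fun i _ => ?_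
          have hpt := congrFun (hXwc i) a
          simp only [Pi.smul_apply, smul_eq_mul] at hpt
          have : (∑ c, X a c * wc i c) = (X *ᵥ wc i) a := rfl
          rw [this, hpt]
      _ = M a b := by
          rw [hM]
          show _ = ∑ i ∈ sset, σ i * (u i a * v i b)
          exact Finset.sum_congr rfl fun i _ => by ring
  have hssetcard : sset.card ≤ k := by
    have h1 : sset.card ≤ (Finset.range k).card := by
      refine Finset.card_le_card_of_injOn (fun i => (i : ℕ)) ?_ ?_
      · intro i hi
        rw [hsset] at hi
        simp only [Finset.mem_coe, Finset.mem_filter, Finset.mem_univ, true_and] at hi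
        exact Finset.mem_range.2 hi
      · intro i _ j _ h
        exact Fin.ext h
    simpa using h1
  have hrankB : B.rank ≤ k := by
    rw [hB]
    exact le_trans (RREAux.rank_ofSum_le σ wc v sset) hssetcard
  -- tail
  have hsv : ∀ (j : ℕ) (h : j - 1 < n), sv (X * A) j = σ ⟨j - 1, h⟩ := by
    intro j h
    unfold sv
    rw [hlist, List.getD_eq_getElem _ _ (by simpa using h), List.getElem_ofFn]
  have hTof : X * A - M = Matrix.of (fun a b => ∑ i ∈ ssetᶜ, σ i * (u i a * v i b)) := by
    ext a b
    show (X * A) a b - M a b = ∑ i ∈ ssetᶜ, σ i * (u i a * v i b)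
    rw [hdec a b, ← Finset.sum_add_sum_compl sset (fun i => σ i * (u i a * v i b))]
    have : M a b = ∑ i ∈ sset, σ i * (u i a * v i b) := rfl
    rw [this]
    ring
  have hfT : frobSq (X * A - M) = ∑ i ∈ ssetᶜ, σ i ^ 2 := by
    rw [hTof]
    exact RREAux.frobSq_ofSum σ u v hv hu ssetᶜ
  have htail : ∑ j ∈ Finset.Icc (k + 1) n, (sv (X * A) j) ^ 2 = ∑ i ∈ ssetᶜ, σ i ^ 2 := by
    have key : ∀ j ∈ Finset.Icc (k + 1) n, j - 1 < n := by
      intro j hj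
      have := Finset.mem_Icc.mp hj
      omega
    refine Finset.sum_bij' (i := fun j hj => (⟨j - 1, key j hj⟩ : Fin n))
      (j := fun i _ => (i : ℕ) + 1) ?_ ?_ ?_ ?_ ?_
    · intro j hj
      have hj' := Finset.mem_Icc.mp hj
      simp only [hsset, Finset.mem_compl, Finset.mem_filter, Finset.mem_univ, true_and, not_lt]
      omega
    · intro i hi
      simp only [hsset, Finset.mem_compl, Finset.mem_filter, Finset.mem_univ, true_and,
        not_lt] at hi
      have hlt := i.isLt
      show ((i : ℕ) + 1) ∈ Finset.Icc (k + 1) n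
      rw [Finset.mem_Icc]
      omega
    · intro j hj
      have hj' := Finset.mem_Icc.mp hj
      show (j - 1) + 1 = j
      omega
    · intro i hi
      apply Fin.ext
      show (i : ℕ) + 1 - 1 = (i : ℕ)
      omega
    · intro j hj
      rw [hsv j (key j hj)]
  -- basic inequality
  have hbasic := hBkmin B hrankB
  have hEG : Y - X * Bk = (Y - X * A) - (X * Bk - X * A) := by abel
  have hET : Y - X * B = (Y - X * A) + (X * A - M) := by rw [hXB]; abel
  rw [hEG, hET, RREAux.frob_expand_sub, RREAux.frob_expand_add] at hbasic
  -- the W matrix and its SVD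
  have hW2 : X * Bk - X * B = X * (Bk - B) := (Matrix.mul_sub X Bk B).symm
  obtain ⟨τ, uw, vw, hτ0, _, hlistW, hvw, huw, hWv, hexpW, hcardW⟩ :=
    RREAux.exists_svd (X * Bk - X * B)
  have hdecW := RREAux.decomp_entry (X * Bk - X * B) τ uw vw hWv hexpW
  have hWof : X * Bk - X * B = Matrix.of (fun a b => ∑ i, τ i * (uw i a * vw i b)) := by
    ext a b
    exact hdecW a b
  have hfW : frobSq (X * Bk - X * B) = ∑ i, τ i ^ 2 := by
    conv_lhs => rw [hWof]
    exact RREAux.frobSq_ofSum τ uw vw hvw huw Finset.univ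
  have hIW : frobInner (P * (Y - X * A)) (X * Bk - X * B)
      = ∑ i, τ i * (uw i ⬝ᵥ ((P * (Y - X * A)) *ᵥ vw i)) := by
    conv_lhs => rw [hWof]
    exact RREAux.frobInner_ofSum (P * (Y - X * A)) τ uw vw Finset.univ
  have hsv1 : 0 ≤ sv (P * (Y - X * A)) 1 := RREAux.sv_nonneg _ 1
  have hdual : frobInner (P * (Y - X * A)) (X * Bk - X * B)
      ≤ sv (P * (Y - X * A)) 1 * ∑ i, τ i := by
    rw [hIW]
    have hterm : ∀ i, τ i * (uw i ⬝ᵥ ((P * (Y - X * A)) *ᵥ vw i))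
        ≤ τ i * sv (P * (Y - X * A)) 1 := by
      intro i
      refine mul_le_mul_of_nonneg_left ?_ (hτ0 i)
      have hop := RREAux.op_bound (P * (Y - X * A)) (uw i) (vw i)
      have huu : Real.sqrt (uw i ⬝ᵥ uw i) ≤ 1 := by
        rw [huw i i, if_pos rfl]
        by_cases h : τ i = 0
        · simp [h]
        · simp [h]
      have hvv : Real.sqrt (vw i ⬝ᵥ vw i) = 1 := by
        rw [hvw i i, if_pos rfl, Real.sqrt_one]
      calc uw i ⬝ᵥ ((P * (Y - X * A)) *ᵥ vw i)
          ≤ sv (P * (Y - X * A)) 1 * (Real.sqrt (uw i ⬝ᵥ uw i) * Real.sqrt (vw i ⬝ᵥ vw i)) :=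
            hop
        _ ≤ sv (P * (Y - X * A)) 1 * 1 := by
            rw [hvv, mul_one]
            exact mul_le_mul_of_nonneg_left huu hsv1
        _ = sv (P * (Y - X * A)) 1 := mul_one _
    calc ∑ i, τ i * (uw i ⬝ᵥ ((P * (Y - X * A)) *ᵥ vw i))
        ≤ ∑ i, τ i * sv (P * (Y - X * A)) 1 := Finset.sum_le_sum fun i _ => hterm i
      _ = sv (P * (Y - X * A)) 1 * ∑ i, τ i := by
          rw [← Finset.sum_mul, mul_comm]
  -- rank of W
  have hrankW : (X * Bk - X * B).rank ≤ 2 * k := by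
    calc (X * Bk - X * B).rank = (X * (Bk - B)).rank := by rw [hW2]
      _ ≤ (Bk - B).rank := Matrix.rank_mul_le_right _ _
      _ ≤ Bk.rank + B.rank := RREAux.rank_sub_le _ _
      _ ≤ k + k := add_le_add hBkrank hrankB
      _ = 2 * k := by omega
  -- sum of τ bound
  have hsumτ : ∑ i, τ i ≤ Real.sqrt (2 * (k : ℝ)) * Real.sqrt (frobSq (X * Bk - X * B)) := by
    set supp : Finset (Fin n) := Finset.univ.filter (fun i => τ i ≠ 0) with hsupp
    have h1 : ∑ i, τ i = ∑ i ∈ supp, τ i := by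
      rw [hsupp, Finset.sum_filter_ne_zero]
    have hcs := Finset.sum_mul_sq_le_sq_mul_sq supp τ (fun _ => (1 : ℝ))
    have hτsq : ∑ i ∈ supp, τ i ^ 2 ≤ frobSq (X * Bk - X * B) := by
      rw [hfW]
      exact Finset.sum_le_sum_of_subset_of_nonneg (Finset.subset_univ _)
        (fun i _ _ => sq_nonneg _)
    have hsuppcard : (supp.card : ℝ) ≤ 2 * (k : ℝ) := by
      have h2 : supp.card = Fintype.card {i // τ i ≠ 0} := by
        rw [Fintype.card_subtype]
      have h3 : supp.card ≤ 2 * k := by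
        rw [h2, hcardW]; exact hrankW
      exact_mod_cast h3
    have hτnn : 0 ≤ ∑ i ∈ supp, τ i := Finset.sum_nonneg fun i _ => hτ0 i
    have hsq : (∑ i ∈ supp, τ i) ^ 2 ≤ frobSq (X * Bk - X * B) * (2 * (k : ℝ)) := by
      have h4 : (∑ i ∈ supp, τ i) ^ 2 ≤ (∑ i ∈ supp, τ i ^ 2) * (supp.card : ℝ) := by
        have h5 : ∑ i ∈ supp, τ i * (1 : ℝ) = ∑ i ∈ supp, τ i := by simp
        have h6 : ∑ i ∈ supp, ((1 : ℝ)) ^ 2 = (supp.card : ℝ) := by simp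
        calc (∑ i ∈ supp, τ i) ^ 2 = (∑ i ∈ supp, τ i * (1 : ℝ)) ^ 2 := by rw [h5]
          _ ≤ (∑ i ∈ supp, τ i ^ 2) * (∑ i ∈ supp, ((1 : ℝ)) ^ 2) := hcs
          _ = (∑ i ∈ supp, τ i ^ 2) * (supp.card : ℝ) := by rw [h6]
      refine le_trans h4 ?_
      have hnn : (0 : ℝ) ≤ ∑ i ∈ supp, τ i ^ 2 := Finset.sum_nonneg fun i _ => sq_nonneg _
      exact mul_le_mul hτsq hsuppcard (Nat.cast_nonneg _) (RREAux.frobSq_nonneg _)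
    calc ∑ i, τ i = ∑ i ∈ supp, τ i := h1
      _ = Real.sqrt ((∑ i ∈ supp, τ i) ^ 2) := (Real.sqrt_sq hτnn).symm
      _ ≤ Real.sqrt (frobSq (X * Bk - X * B) * (2 * (k : ℝ))) := Real.sqrt_le_sqrt hsq
      _ = Real.sqrt (2 * (k : ℝ)) * Real.sqrt (frobSq (X * Bk - X * B)) := by
          rw [Real.sqrt_mul (RREAux.frobSq_nonneg _), mul_comm]
  -- projection step
  have hproj : frobInner (Y - X * A) (X * Bk - X * B)
      = frobInner (P * (Y - X * A)) (X * Bk - X * B) := by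
    rw [hW2]
    exact (RREAux.frobInner_proj (Y - X * A) P X (Bk - B) hPsymm hPX).symm
  -- split of the inner product
  have hGTW : (X * Bk - X * A) + (X * A - M) = X * Bk - X * B := by rw [hXB]; abel
  have hsplit : frobInner (Y - X * A) (X * Bk - X * A) + frobInner (Y - X * A) (X * A - M)
      = frobInner (Y - X * A) (X * Bk - X * B) := by
    rw [← RREAux.frobInner_add_right, hGTW]
  -- triangle inequality
  have haT : (0 : ℝ) ≤ frobSq (X * Bk - X * A) := RREAux.frobSq_nonneg _
  have hbT : (0 : ℝ) ≤ frobSq (X * A - M) := RREAux.frobSq_nonneg _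
  have htri : Real.sqrt (frobSq (X * Bk - X * B))
      ≤ Real.sqrt (frobSq (X * Bk - X * A)) + Real.sqrt (frobSq (X * A - M)) := by
    have h1 : frobSq (X * Bk - X * B)
        ≤ (Real.sqrt (frobSq (X * Bk - X * A)) + Real.sqrt (frobSq (X * A - M))) ^ 2 := by
      rw [← hGTW, RREAux.frob_expand_add]
      have hcs := RREAux.frobInner_le (X * Bk - X * A) (X * A - M)
      have e1 : Real.sqrt (frobSq (X * Bk - X * A)) ^ 2 = frobSq (X * Bk - X * A) :=
        Real.sq_sqrt haT
      have e2 : Real.sqrt (frobSq (X * A - M)) ^ 2 = frobSq (X * A - M) := Real.sq_sqrt hbT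
      nlinarith [Real.sqrt_nonneg (frobSq (X * Bk - X * A)),
        Real.sqrt_nonneg (frobSq (X * A - M))]
    calc Real.sqrt (frobSq (X * Bk - X * B))
        ≤ Real.sqrt ((Real.sqrt (frobSq (X * Bk - X * A))
            + Real.sqrt (frobSq (X * A - M))) ^ 2) := Real.sqrt_le_sqrt h1
      _ = _ := Real.sqrt_sq (by positivity)
  -- put everything together
  have hmain : frobSq (X * Bk - X * A) ≤ frobSq (X * A - M)
      + 2 * (sv (P * (Y - X * A)) 1 * (Real.sqrt (2 * (k : ℝ))
          * Real.sqrt (frobSq (X * Bk - X * B)))) := by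
    have h1 : frobSq (X * Bk - X * A) ≤ frobSq (X * A - M)
        + 2 * frobInner (Y - X * A) (X * Bk - X * B) := by
      rw [← hsplit]; linarith [hbasic]
    have h2 : frobInner (Y - X * A) (X * Bk - X * B)
        ≤ sv (P * (Y - X * A)) 1 * ∑ i, τ i := by
      rw [hproj]; exact hdual
    have h3 : sv (P * (Y - X * A)) 1 * ∑ i, τ i
        ≤ sv (P * (Y - X * A)) 1 * (Real.sqrt (2 * (k : ℝ))
            * Real.sqrt (frobSq (X * Bk - X * B))) :=
      mul_le_mul_of_nonneg_left hsumτ hsv1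
    linarith
  -- final numerical argument
  set d := sv (P * (Y - X * A)) 1 with hd
  set a := Real.sqrt (frobSq (X * Bk - X * A)) with ha
  set b := Real.sqrt (frobSq (X * A - M)) with hb
  set sk := Real.sqrt (2 * (k : ℝ)) with hsk
  have ha0 : 0 ≤ a := Real.sqrt_nonneg _
  have hb0 : 0 ≤ b := Real.sqrt_nonneg _
  have hsk0 : 0 ≤ sk := Real.sqrt_nonneg _
  have ha2 : a ^ 2 = frobSq (X * Bk - X * A) := Real.sq_sqrt haT
  have hb2 : b ^ 2 = frobSq (X * A - M) := Real.sq_sqrt hbT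
  have hsk2 : sk ^ 2 = 2 * (k : ℝ) := Real.sq_sqrt (by positivity)
  set ss := sk * d with hss
  have hss0 : 0 ≤ ss := mul_nonneg hsk0 hsv1
  have hchain : a ^ 2 ≤ b ^ 2 + 2 * (ss * (a + b)) := by
    rw [ha2, hb2]
    have h4 : Real.sqrt (frobSq (X * Bk - X * B)) ≤ a + b := htri
    have h5 : d * (sk * Real.sqrt (frobSq (X * Bk - X * B))) ≤ ss * (a + b) := by
      rw [hss]
      calc d * (sk * Real.sqrt (frobSq (X * Bk - X * B)))
          = sk * d * Real.sqrt (frobSq (X * Bk - X * B)) := by ring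
        _ ≤ sk * d * (a + b) :=
            mul_le_mul_of_nonneg_left h4 (mul_nonneg hsk0 hsv1)
    linarith [hmain]
  have hab : a ≤ b + 2 * ss := by
    nlinarith [hchain, ha0, hb0, hss0, sq_nonneg (a - b - 2 * ss)]
  have hfinal : a ^ 2 ≤ (1 + 2 / θ) ^ 2 * b ^ 2 + (1 + θ) * (1 + 2 / θ) * ss ^ 2 := by
    have h6 : a ^ 2 ≤ (b + 2 * ss) ^ 2 := by nlinarith [hab, ha0, hb0, hss0]
    exact le_trans h6 (RREAux.scalar_final θ b ss hθ hb0 hss0)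
  have hss2 : ss ^ 2 = 2 * (k : ℝ) * d ^ 2 := by
    rw [hss, mul_pow, hsk2]
  have hbtail : b ^ 2 = ∑ j ∈ Finset.Icc (k + 1) n, (sv (X * A) j) ^ 2 := by
    rw [hb2, hfT, htail]
  rw [← ha2]
  calc a ^ 2 ≤ (1 + 2 / θ) ^ 2 * b ^ 2 + (1 + θ) * (1 + 2 / θ) * ss ^ 2 := hfinal
    _ = (1 + 2 / θ) ^ 2 * (∑ j ∈ Finset.Icc (k + 1) n, (sv (X * A) j) ^ 2)
        + 2 * (1 + θ) * (1 + 2 / θ) * (k : ℝ) * d ^ 2 := by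
        rw [hbtail, hss2]; ring
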